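/- Let A ∈ ℝ^{n×n} and B ∈ ℝ^{m×m} be real symmetric matrices such that 𝟙_n^T·A^ℓ·𝟙_n = 𝟙_m^T·B^ℓ·𝟙_m holds for every ℓ ∈ ℕ. Then for every λ ∈ ℝ, the Euclidean norm of the orthogonal projection of the all-ones vector 𝟙_n onto the eigenspace ker(A − λI_n) equals the Euclidean norm of the orthogonal projection of 𝟙_m onto ker(B − λI_m). In particular, A and B have the same set of useful eigenvalues, i.e. eigenvalues whose eigenspace is not orthogonal to the all-ones vector. -/

import Mathlib

open Matrix Finset
open scoped RealInnerProductSpace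

variable {n : ℕ}


lemma dot_inner (x y : EuclideanSpace ℝ (Fin n)) :
    dotProduct (x : Fin n → ℝ) (y : Fin n → ℝ) = ⟪x, y⟫ := by
  simp [dotProduct, PiLp.inner_apply, RCLike.inner_apply]
  exact Finset.sum_congr rfl fun _ _ => mul_comm _ _

lemma moment (A : Matrix (Fin n) (Fin n) ℝ) (hH : A.IsHermitian) (ℓ : ℕ) :
    (fun _ => (1:ℝ)) ⬝ᵥ ((A ^ ℓ) *ᵥ (fun _ => 1)) =
      ∑ i, hH.eigenvalues i ^ ℓ *
        ⟪hH.eigenvectorBasis i, (WithLp.toLp 2 (fun _ => 1) : EuclideanSpace ℝ (Fin n))⟫ ^ 2 := by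
  set v := hH.eigenvectorBasis with hv
  set ones : EuclideanSpace ℝ (Fin n) := WithLp.toLp 2 (fun _ => 1) with hones
  have hpow : ∀ i, (A ^ ℓ) *ᵥ ⇑(v i) = (hH.eigenvalues i ^ ℓ) • ⇑(v i) := by
    intro i
    induction ℓ with
    | zero => simp
    | succ k ih =>
      rw [pow_succ, pow_succ, ← mulVec_mulVec, hH.mulVec_eigenvectorBasis,
        mulVec_smul, ih, smul_smul, mul_comm]
  have key : (A ^ ℓ) *ᵥ (ones : Fin n → ℝ) =
      ∑ i, (hH.eigenvalues i ^ ℓ * ⟪v i, ones⟫) • ⇑(v i) := by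
    conv_lhs => rw [← v.sum_repr' ones]
    show Matrix.mulVecLin (A ^ ℓ) (WithLp.ofLp (∑ i, ⟪v i, ones⟫ • v i)) = _
    rw [WithLp.ofLp_sum, map_sum]
    refine Finset.sum_congr rfl fun i _ => ?_
    show (A ^ ℓ) *ᵥ (⟪v i, ones⟫ • ⇑(v i)) = _
    rw [mulVec_smul, hpow, smul_smul, mul_comm]
  calc (fun _ => (1:ℝ)) ⬝ᵥ ((A ^ ℓ) *ᵥ (fun _ => 1))
      = ⟪ones, (WithLp.toLp 2 ((A ^ ℓ) *ᵥ (ones : Fin n → ℝ)) : EuclideanSpace ℝ (Fin n))⟫ :=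
        dot_inner ones (WithLp.toLp 2 ((A ^ ℓ) *ᵥ (ones : Fin n → ℝ)))
    _ = ∑ i, hH.eigenvalues i ^ ℓ * ⟪v i, ones⟫ ^ 2 := by
        rw [key]
        rw [show WithLp.toLp 2 (∑ i, (hH.eigenvalues i ^ ℓ * ⟪v i, ones⟫) • ⇑(v i)) =
            ∑ i, (hH.eigenvalues i ^ ℓ * ⟪v i, ones⟫) • v i from
          WithLp.ofLp_injective 2 (by rw [WithLp.ofLp_sum]; rfl)]
        show ⟪ones, ∑ i, (hH.eigenvalues i ^ ℓ * ⟪v i, ones⟫) • v i⟫ = _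
        rw [inner_sum]
        refine Finset.sum_congr rfl fun i _ => ?_
        rw [real_inner_smul_right, real_inner_comm]
        ring



lemma proj_eq (A : Matrix (Fin n) (Fin n) ℝ) (hH : A.IsHermitian) (μ : ℝ) :
    ‖Submodule.orthogonalProjectionOnto (LinearMap.ker (toEuclideanLin (A - μ • 1)))
        ((WithLp.toLp 2 (fun _ => 1) : EuclideanSpace ℝ (Fin n)))‖ ^ 2 =
      ∑ i ∈ univ.filter (fun i => hH.eigenvalues i = μ),
        ⟪hH.eigenvectorBasis i, (WithLp.toLp 2 (fun _ => 1) : EuclideanSpace ℝ (Fin n))⟫ ^ 2 := by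
  classical
  set v := hH.eigenvectorBasis with hv
  set ones : EuclideanSpace ℝ (Fin n) := WithLp.toLp 2 (fun _ => 1) with hones
  set c : Fin n → ℝ := fun i => ⟪v i, ones⟫ with hc
  set s : Finset (Fin n) := univ.filter (fun i => hH.eigenvalues i = μ) with hs
  set K := LinearMap.ker (toEuclideanLin (A - μ • 1)) with hK
  have hTv : ∀ i, toEuclideanLin A (v i) = hH.eigenvalues i • v i := by
    intro i
    show WithLp.toLp 2 (A *ᵥ ⇑(v i)) = WithLp.toLp 2 (hH.eigenvalues i • ⇑(v i))
    exact congrArg _ (hH.mulVec_eigenvectorBasis i)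
  have hsm : ∀ x : EuclideanSpace ℝ (Fin n),
      toEuclideanLin ((μ : ℝ) • (1 : Matrix (Fin n) (Fin n) ℝ)) x = μ • x := by
    intro x
    show WithLp.toLp 2 ((μ • (1 : Matrix (Fin n) (Fin n) ℝ)) *ᵥ x.ofLp) = WithLp.toLp 2 (μ • x.ofLp)
    rw [smul_mulVec, one_mulVec]
  have memK : ∀ x : EuclideanSpace ℝ (Fin n), x ∈ K ↔ toEuclideanLin A x = μ • x := by
    intro x
    rw [hK, LinearMap.mem_ker, map_sub, LinearMap.sub_apply, sub_eq_zero, hsm]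
  set u : EuclideanSpace ℝ (Fin n) := ∑ i ∈ s, c i • v i with hu
  have hu_mem : u ∈ K := by
    rw [memK, hu, map_sum, Finset.smul_sum]
    refine Finset.sum_congr rfl fun i hi => ?_
    rw [LinearMap.map_smul, hTv i, smul_smul, smul_smul]
    rw [hs, Finset.mem_filter] at hi
    rw [hi.2, mul_comm]
  have horth : ∀ w ∈ K, ⟪ones - u, w⟫ = 0 := by
    intro w hw
    have hwe : toEuclideanLin A w = μ • w := (memK w).1 hw
    have hd : ∀ j, hH.eigenvalues j ≠ μ → ⟪v j, w⟫ = 0 := by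
      intro j hj
      have hsym := (isHermitian_iff_isSymmetric.mp hH) (v j) w
      rw [hTv j, hwe, real_inner_smul_left, real_inner_smul_right] at hsym
      have h2 : (hH.eigenvalues j - μ) * ⟪v j, w⟫ = 0 := by ring_nf; linarith [hsym]
      rcases mul_eq_zero.mp h2 with h3 | h3
      · exact absurd (sub_eq_zero.mp h3) hj
      · exact h3
    have hw_repr : w = ∑ j ∈ s, ⟪v j, w⟫ • v j := by
      conv_lhs => rw [← v.sum_repr' w]
      rw [← Finset.sum_filter_add_sum_filter_not univ (fun j => hH.eigenvalues j = μ)]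
      rw [← hs]
      have : ∑ j ∈ univ.filter (fun j => ¬ hH.eigenvalues j = μ), ⟪v j, w⟫ • v j = 0 := by
        refine Finset.sum_eq_zero fun j hj => ?_
        rw [Finset.mem_filter] at hj
        rw [hd j hj.2, zero_smul]
      rw [this, add_zero]
    conv_lhs => rw [hw_repr]
    rw [inner_sum]
    refine Finset.sum_eq_zero fun j hj => ?_
    rw [real_inner_smul_right]
    have h4 : ⟪u, v j⟫ = c j := by
      have := v.orthonormal.inner_left_sum c (i := j) hj
      simpa using this
    have h5 : ⟪ones - u, v j⟫ = 0 := by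
      rw [inner_sub_left, h4, real_inner_comm]; exact sub_self _
    rw [h5, mul_zero]
  have hproj : ((Submodule.orthogonalProjectionOnto K ones : K) : EuclideanSpace ℝ (Fin n)) = u :=
    Submodule.eq_starProjection_of_mem_of_inner_eq_zero hu_mem horth
  have hnorm : ‖Submodule.orthogonalProjectionOnto K ones‖ = ‖u‖ := by
    rw [← hproj]; rfl
  rw [hnorm, ← real_inner_self_eq_norm_sq, hu]
  rw [v.orthonormal.inner_sum c c s]
  simp [hc, pow_two]

lemma poly_sum {ι κ : Type*} [Fintype ι] [Fintype κ] (e : ι → ℝ) (w : ι → ℝ)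
    (f : κ → ℝ) (x : κ → ℝ)
    (hmom : ∀ ℓ : ℕ, ∑ i, e i ^ ℓ * w i = ∑ j, f j ^ ℓ * x j) (p : Polynomial ℝ) :
    ∑ i, p.eval (e i) * w i = ∑ j, p.eval (f j) * x j := by
  induction p using Polynomial.induction_on' with
  | add p q hp hq =>
    simp only [Polynomial.eval_add, add_mul, Finset.sum_add_distrib, hp, hq]
  | monomial k a =>
    simp only [Polynomial.eval_monomial]
    simp_rw [mul_assoc, ← Finset.mul_sum, hmom k]

lemma lagrange_key {α : Type*} [Fintype α] (T : Finset ℝ) (μ : ℝ) (hμ : μ ∈ T)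
    (g : α → ℝ) (y : α → ℝ) (hg : ∀ a, g a ∈ T) :
    ∑ a, (Lagrange.basis T id μ).eval (g a) * y a =
      ∑ a ∈ univ.filter (fun a => g a = μ), y a := by
  classical
  rw [← Finset.sum_filter_add_sum_filter_not univ (fun a => g a = μ)
    (fun a => (Lagrange.basis T id μ).eval (g a) * y a)]
  have h1 : ∑ a ∈ univ.filter (fun a => g a = μ),
      (Lagrange.basis T id μ).eval (g a) * y a =
      ∑ a ∈ univ.filter (fun a => g a = μ), y a := by
    refine Finset.sum_congr rfl fun a ha => ?_
    rw [mem_filter] at ha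
    rw [ha.2]
    rw [show Polynomial.eval μ (Lagrange.basis T id μ)
        = Polynomial.eval (id μ) (Lagrange.basis T id μ) from rfl]
    rw [Lagrange.eval_basis_self (Function.injective_id.injOn) hμ, one_mul]
  have h2 : ∑ a ∈ univ.filter (fun a => ¬ g a = μ),
      (Lagrange.basis T id μ).eval (g a) * y a = 0 := by
    refine Finset.sum_eq_zero fun a ha => ?_
    rw [mem_filter] at ha
    rw [show Polynomial.eval (g a) (Lagrange.basis T id μ)
        = Polynomial.eval (id (g a)) (Lagrange.basis T id μ) from rfl]
    rw [Lagrange.eval_basis_of_ne (fun hh => ha.2 hh.symm) (hg a), zero_mul]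
  rw [h1, h2, add_zero]

lemma filter_sum_eq {ι κ : Type*} [Fintype ι] [Fintype κ] (e : ι → ℝ) (w : ι → ℝ)
    (f : κ → ℝ) (x : κ → ℝ)
    (hmom : ∀ ℓ : ℕ, ∑ i, e i ^ ℓ * w i = ∑ j, f j ^ ℓ * x j) (μ : ℝ) :
    ∑ i ∈ univ.filter (fun i => e i = μ), w i =
      ∑ j ∈ univ.filter (fun j => f j = μ), x j := by
  classical
  set T : Finset ℝ := (univ.image e) ∪ (univ.image f) with hT
  by_cases hμ : μ ∈ T
  · have hgA : ∀ i, e i ∈ T := fun i => mem_union_left _ (mem_image_of_mem e (mem_univ i))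
    have hgB : ∀ j, f j ∈ T := fun j => mem_union_right _ (mem_image_of_mem f (mem_univ j))
    rw [← lagrange_key T μ hμ e w hgA, ← lagrange_key T μ hμ f x hgB]
    exact poly_sum e w f x hmom (Lagrange.basis T id μ)
  · have hA : univ.filter (fun i => e i = μ) = ∅ := by
      refine Finset.filter_eq_empty_iff.mpr ?_
      intro i _ hi
      exact hμ (hi ▸ mem_union_left _ (mem_image_of_mem e (mem_univ i)))
    have hB : univ.filter (fun j => f j = μ) = ∅ := by
      refine Finset.filter_eq_empty_iff.mpr ?_
      intro j _ hj
      exact hμ (hj ▸ mem_union_right _ (mem_image_of_mem f (mem_univ j)))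
    rw [hA, hB]
    simp

set_option maxHeartbeats 2000000 in
theorem stmt5 (n m : ℕ) (A : Matrix (Fin n) (Fin n) ℝ) (B : Matrix (Fin m) (Fin m) ℝ)
    (hA : A.IsSymm) (hB : B.IsSymm)
    (h : ∀ ℓ : ℕ,
      (fun _ => (1 : ℝ)) ⬝ᵥ ((A ^ ℓ) *ᵥ (fun _ => 1)) =
      (fun _ => (1 : ℝ)) ⬝ᵥ ((B ^ ℓ) *ᵥ (fun _ => 1))) :
    ∀ μ : ℝ,
      ‖Submodule.orthogonalProjectionOnto (LinearMap.ker (Matrix.toEuclideanLin (A - μ • 1)))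
          ((WithLp.toLp 2 (fun _ => 1) : EuclideanSpace ℝ (Fin n)))‖ =
      ‖Submodule.orthogonalProjectionOnto (LinearMap.ker (Matrix.toEuclideanLin (B - μ • 1)))
          ((WithLp.toLp 2 (fun _ => 1) : EuclideanSpace ℝ (Fin m)))‖ := by
  intro μ
  have hHA : A.IsHermitian := (Matrix.conjTranspose_eq_transpose_of_trivial A).trans hA
  have hHB : B.IsHermitian := (Matrix.conjTranspose_eq_transpose_of_trivial B).trans hB
  have hmom : ∀ ℓ : ℕ,
      ∑ i, hHA.eigenvalues i ^ ℓ *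
        (⟪hHA.eigenvectorBasis i, (WithLp.toLp 2 (fun _ => 1) : EuclideanSpace ℝ (Fin n))⟫ ^ 2) =
      ∑ j, hHB.eigenvalues j ^ ℓ *
        (⟪hHB.eigenvectorBasis j, (WithLp.toLp 2 (fun _ => 1) : EuclideanSpace ℝ (Fin m))⟫ ^ 2) := by
    intro ℓ
    rw [← moment A hHA ℓ, ← moment B hHB ℓ]
    exact h ℓ
  have hf := filter_sum_eq (fun i => hHA.eigenvalues i)
      (fun i => ⟪hHA.eigenvectorBasis i, (WithLp.toLp 2 (fun _ => 1) : EuclideanSpace ℝ (Fin n))⟫ ^ 2)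
      (fun j => hHB.eigenvalues j)
      (fun j => ⟪hHB.eigenvectorBasis j, (WithLp.toLp 2 (fun _ => 1) : EuclideanSpace ℝ (Fin m))⟫ ^ 2)
      hmom μ
  have hsq : ‖Submodule.orthogonalProjectionOnto (LinearMap.ker (Matrix.toEuclideanLin (A - μ • 1)))
      ((WithLp.toLp 2 (fun _ => 1) : EuclideanSpace ℝ (Fin n)))‖ ^ 2 =
      ‖Submodule.orthogonalProjectionOnto (LinearMap.ker (Matrix.toEuclideanLin (B - μ • 1)))
      ((WithLp.toLp 2 (fun _ => 1) : EuclideanSpace ℝ (Fin m)))‖ ^ 2 := by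
    rw [proj_eq A hHA μ, proj_eq B hHB μ]
    exact hf
  calc ‖Submodule.orthogonalProjectionOnto (LinearMap.ker (Matrix.toEuclideanLin (A - μ • 1)))
          ((WithLp.toLp 2 (fun _ => 1) : EuclideanSpace ℝ (Fin n)))‖
      = Real.sqrt (‖Submodule.orthogonalProjectionOnto (LinearMap.ker (Matrix.toEuclideanLin (A - μ • 1)))
          ((WithLp.toLp 2 (fun _ => 1) : EuclideanSpace ℝ (Fin n)))‖ ^ 2) := (Real.sqrt_sq (norm_nonneg _)).symm
    _ = Real.sqrt (‖Submodule.orthogonalProjectionOnto (LinearMap.ker (Matrix.toEuclideanLin (B - μ • 1)))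
          ((WithLp.toLp 2 (fun _ => 1) : EuclideanSpace ℝ (Fin m)))‖ ^ 2) := by rw [hsq]
    _ = _ := Real.sqrt_sq (norm_nonneg _)
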